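/- Let r ≥ 3, n = p_1^{n_1}⋯p_r^{n_r} with primes p_1 < ... < p_r, and β_a^s defined by β_a^s = φ(n) + (n/(p_1⋯p_r))·(1/p_a^{s-1})·[ (p_1⋯p_r)/p_a + φ((p_1⋯p_r)/p_a)·(p_a^{s-1} − 2) ]. Then β_1^1 > β_2^1 > ... > β_r^1. -/

import Mathlib

open Finset

lemma tot_prod (s : Finset ℕ) (p : ℕ → ℕ) (hp : ∀ i ∈ s, (p i).Prime)
    (hinj : ∀ i ∈ s, ∀ j ∈ s, i ≠ j → p i ≠ p j) :
    Nat.totient (∏ i ∈ s, p i) = ∏ i ∈ s, (p i - 1) := by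
  classical
  induction s using Finset.induction_on with
  | empty => simp
  | @insert a s ha ih =>
    have hpa := hp a (mem_insert_self a s)
    have hcop : Nat.Coprime (p a) (∏ i ∈ s, p i) := by
      apply Nat.Coprime.prod_right
      intro i hi
      exact (Nat.coprime_primes hpa (hp i (mem_insert_of_mem hi))).2
        (hinj a (mem_insert_self a s) i (mem_insert_of_mem hi)
          (by rintro rfl; exact ha hi))
    rw [prod_insert ha, prod_insert ha, Nat.totient_mul hcop,
      Nat.totient_prime hpa,
      ih (fun i hi => hp i (mem_insert_of_mem hi))
        (fun i hi j hj => hinj i (mem_insert_of_mem hi) j (mem_insert_of_mem hj))]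

noncomputable def beta (r : ℕ) (p e : ℕ → ℕ) (a s : ℕ) : ℚ :=
  (Nat.totient (∏ i ∈ Finset.range r, p i ^ e i) : ℚ) +
    ((∏ i ∈ Finset.range r, p i ^ e i : ℕ) : ℚ) /
        ((∏ i ∈ Finset.range r, p i : ℕ) : ℚ) *
      (1 / (p a : ℚ) ^ (s - 1)) *
      (((∏ i ∈ Finset.range r, p i : ℕ) : ℚ) / (p a : ℚ) +
        (Nat.totient ((∏ i ∈ Finset.range r, p i) / p a) : ℚ) *
          ((p a : ℚ) ^ (s - 1) - 2))

theorem stmt_12 (r : ℕ) (hr : 3 ≤ r) (p e : ℕ → ℕ)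
    (hp : ∀ i < r, (p i).Prime)
    (hmono : ∀ i j, i < j → j < r → p i < p j)
    (he : ∀ i < r, 1 ≤ e i)
    (a b : ℕ) (hab : a < b) (hb : b < r) :
    beta r p e a 1 > beta r p e b 1 := by
  classical
  have har : a < r := hab.trans hb
  have hmem_a : a ∈ Finset.range r := mem_range.2 har
  have hmem_b : b ∈ Finset.range r := mem_range.2 hb
  have hne : a ≠ b := hab.ne
  have hprime : ∀ i ∈ Finset.range r, (p i).Prime := fun i hi => hp i (mem_range.1 hi)
  have hinj : ∀ i ∈ Finset.range r, ∀ j ∈ Finset.range r, i ≠ j → p i ≠ p j := by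
    intro i hi j hj hij
    rcases hij.lt_or_gt with h | h
    · exact (hmono i j h (mem_range.1 hj)).ne
    · exact (hmono j i h (mem_range.1 hi)).ne'
  unfold beta
  simp only [Nat.sub_self, pow_zero, one_div, inv_one, mul_one]
  set P : ℕ := ∏ i ∈ Finset.range r, p i with hP
  set N : ℕ := ∏ i ∈ Finset.range r, p i ^ e i with hN
  set t : Finset ℕ := ((Finset.range r).erase a).erase b with ht
  have hb_mem : b ∈ (Finset.range r).erase a := mem_erase.2 ⟨hne.symm, hmem_b⟩
  have ha_mem : a ∈ (Finset.range r).erase b := mem_erase.2 ⟨hne, hmem_a⟩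
  -- nat decompositions
  have hPa : P = p a * ∏ i ∈ (Finset.range r).erase a, p i := (mul_prod_erase _ _ hmem_a).symm
  have hPb : P = p b * ∏ i ∈ (Finset.range r).erase b, p i := (mul_prod_erase _ _ hmem_b).symm
  have hEa : ∏ i ∈ (Finset.range r).erase a, p i = p b * ∏ i ∈ t, p i :=
    (mul_prod_erase _ _ hb_mem).symm
  have hEb : ∏ i ∈ (Finset.range r).erase b, p i = p a * ∏ i ∈ t, p i := by
    rw [ht, Finset.erase_right_comm]
    exact (mul_prod_erase _ _ ha_mem).symm
  have hdiva : P / p a = ∏ i ∈ (Finset.range r).erase a, p i := by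
    rw [hPa]; exact Nat.mul_div_cancel_left _ (hp a har).pos
  have hdivb : P / p b = ∏ i ∈ (Finset.range r).erase b, p i := by
    rw [hPb]; exact Nat.mul_div_cancel_left _ (hp b hb).pos
  have hta : Nat.totient (P / p a) = (p b - 1) * ∏ i ∈ t, (p i - 1) := by
    rw [hdiva, tot_prod _ _ (fun i hi => hprime i (mem_of_mem_erase hi))
      (fun i hi j hj => hinj i (mem_of_mem_erase hi) j (mem_of_mem_erase hj))]
    exact (mul_prod_erase _ _ hb_mem).symm
  have htb : Nat.totient (P / p b) = (p a - 1) * ∏ i ∈ t, (p i - 1) := by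
    rw [hdivb, tot_prod _ _ (fun i hi => hprime i (mem_of_mem_erase hi))
      (fun i hi j hj => hinj i (mem_of_mem_erase hi) j (mem_of_mem_erase hj))]
    rw [ht, Finset.erase_right_comm]
    exact (mul_prod_erase _ (fun i => p i - 1) ha_mem).symm
  -- rational quantities
  set QA : ℚ := ∏ i ∈ t, (p i : ℚ) with hQA
  set QB : ℚ := ∏ i ∈ t, ((p i : ℚ) - 1) with hQB
  have htsub : ∀ i ∈ t, (p i).Prime := fun i hi =>
    hprime i (mem_of_mem_erase (mem_of_mem_erase hi))
  have hcastA : ((∏ i ∈ t, p i : ℕ) : ℚ) = QA := by rw [hQA]; push_cast; rfl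
  have hcastB : ((∏ i ∈ t, (p i - 1) : ℕ) : ℚ) = QB := by
    rw [hQB, Nat.cast_prod]
    exact prod_congr rfl fun i hi => by
      rw [Nat.cast_sub (htsub i hi).one_lt.le, Nat.cast_one]
  have hpa_pos : (0 : ℚ) < p a := by exact_mod_cast (hp a har).pos
  have hpb_pos : (0 : ℚ) < p b := by exact_mod_cast (hp b hb).pos
  have hpab : (p a : ℚ) < p b := by exact_mod_cast hmono a b hab hb
  -- cast identities
  have hΦa : ((Nat.totient (P / p a) : ℕ) : ℚ) = ((p b : ℚ) - 1) * QB := by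
    rw [hta, Nat.cast_mul, hcastB, Nat.cast_sub (hp b hb).one_lt.le, Nat.cast_one]
  have hΦb : ((Nat.totient (P / p b) : ℕ) : ℚ) = ((p a : ℚ) - 1) * QB := by
    rw [htb, Nat.cast_mul, hcastB, Nat.cast_sub (hp a har).one_lt.le, Nat.cast_one]
  have hDa : (P : ℚ) / (p a : ℚ) = (p b : ℚ) * QA := by
    have : ((P / p a : ℕ) : ℚ) = (p b : ℚ) * QA := by
      rw [hdiva, hEa, Nat.cast_mul, hcastA]
    rw [← this, Nat.cast_div ⟨_, hPa⟩ hpa_pos.ne']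
  have hDb : (P : ℚ) / (p b : ℚ) = (p a : ℚ) * QA := by
    have : ((P / p b : ℕ) : ℚ) = (p a : ℚ) * QA := by
      rw [hdivb, hEb, Nat.cast_mul, hcastA]
    rw [← this, Nat.cast_div ⟨_, hPb⟩ hpb_pos.ne']
  -- positivity
  have hNpos : (0 : ℚ) < N := by
    rw [hN]; push_cast
    exact prod_pos fun i hi => pow_pos (by exact_mod_cast (hprime i hi).pos) _
  have hPpos : (0 : ℚ) < P := by
    rw [hP]; push_cast
    exact prod_pos fun i hi => by exact_mod_cast (hprime i hi).pos
  have htne : t.Nonempty := by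
    rw [← Finset.card_pos, ht, Finset.card_erase_of_mem hb_mem,
      Finset.card_erase_of_mem hmem_a, Finset.card_range]
    omega
  have hQBlt : QB < QA := by
    rw [hQA, hQB]
    refine Finset.prod_lt_prod_of_nonempty (fun i hi => ?_) (fun i hi => by linarith) htne
    have : (1 : ℚ) < p i := by exact_mod_cast (htsub i hi).one_lt
    linarith
  have hdivpos : (0 : ℚ) < (N : ℚ) / (P : ℚ) := div_pos hNpos hPpos
  rw [hΦa, hΦb, hDa, hDb]
  have hkey : (p a : ℚ) * QA + ((p a : ℚ) - 1) * QB * (1 - 2)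
      < (p b : ℚ) * QA + ((p b : ℚ) - 1) * QB * (1 - 2) := by
    nlinarith [mul_pos (sub_pos.2 hpab) (sub_pos.2 hQBlt)]
  exact (add_lt_add_iff_left _).2 (mul_lt_mul_of_pos_left hkey hdivpos)
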